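/- Let μ, ν be probability measures on Cantor space with full support, let M(σ) = μ([σ])/ν([σ]), and let ω satisfy liminf_n ν([ω↾(n+1)] | [ω↾n]) > 0 (ω is ν-mild). Then the following are equivalent: (1) lim_n T_{F_{n+1}}(μ,ν)(ω) = 0 where T_{F_{n+1}}(μ,ν)(ω) is the total variational distance between μ(·|[ω↾n])↾F_{n+1} and ν(·|[ω↾n])↾F_{n+1}; (2) lim_n |μ([ω↾(n+1)]|[ω↾n]) − ν([ω↾(n+1)]|[ω↾n])| = 0; (3) lim_n M(ω↾(n+1))/M(ω↾n) = 1. -/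

import Mathlib

open MeasureTheory Filter Topology

/-- Cantor space `2^ℕ`. -/
abbrev Cantor : Type := ℕ → Bool

/-- The basic clopen cylinder determined by a finite binary string. -/
def cyl (σ : List Bool) : Set Cantor := {ω | ∀ i : Fin σ.length, ω i = σ.get i}

/-- The first `n` bits of `ω`, as a finite binary string. -/
def pre (ω : Cantor) (n : ℕ) : List Bool := (List.range n).map ω

/-- A measure on Cantor space has full support if every cylinder has positive measure. -/
def FullSupport (ν : Measure Cantor) : Prop := ∀ σ : List Bool, 0 < ν (cyl σ)

/-- Conditional probability `ν([τ] | [σ]) = ν([τ])/ν([σ])` (intended for `τ` extending `σ`). -/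
noncomputable def cp (ν : Measure Cantor) (τ σ : List Bool) : ℝ :=
  (ν (cyl τ)).toReal / (ν (cyl σ)).toReal

/-- The conditional measure `ν(· | [σ]) = ν(· ∩ [σ]) / ν([σ])`. -/
noncomputable def condMeas (ν : Measure Cantor) (σ : List Bool) : Measure Cantor :=
  (ν (cyl σ))⁻¹ • ν.restrict (cyl σ)

/-- The σ-algebra generated by the length-`k` cylinders. -/
def Falg (k : ℕ) : MeasurableSpace Cantor :=
  MeasurableSpace.generateFrom {A | ∃ σ : List Bool, σ.length = k ∧ A = cyl σ}

/-- Total variational distance between two measures restricted to a σ-algebra `G`. -/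
noncomputable def tv (G : MeasurableSpace Cantor) (ρ τ : @Measure Cantor MeasurableSpace.pi) : ℝ :=
  ⨆ A : {A : Set Cantor // MeasurableSet[G] A}, |(ρ A.1).toReal - (τ A.1).toReal|

lemma pre_length (ω : Cantor) (n : ℕ) : (pre ω n).length = n := by simp [pre]

lemma pre_succ (ω : Cantor) (n : ℕ) : pre ω (n+1) = pre ω n ++ [ω n] := by
  simp [pre, List.range_succ]

lemma mem_cyl_append {z : Cantor} {σ : List Bool} {b : Bool} :
    z ∈ cyl (σ ++ [b]) ↔ z ∈ cyl σ ∧ z σ.length = b := by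
  simp only [cyl, Set.mem_setOf_eq, List.get_eq_getElem]
  constructor
  · intro h
    refine ⟨fun i => ?_, ?_⟩
    · have h1 : (i : ℕ) < (σ ++ [b]).length := by simp
      have := h ⟨i, h1⟩
      simpa [List.getElem_append, i.2] using this
    · have h1 : σ.length < (σ ++ [b]).length := by simp
      have := h ⟨σ.length, h1⟩
      simpa [List.getElem_append] using this
  · rintro ⟨h1, h2⟩ i
    rcases Nat.lt_or_ge (i : ℕ) σ.length with hi | hi
    · rw [List.getElem_append]
      simp [hi]
      exact h1 ⟨i, hi⟩
    · have h3 : (i : ℕ) = σ.length := by have := i.2; simp at this; omega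
      rw [List.getElem_append]
      simp [h3]
      exact h2

lemma cyl_append_subset (σ : List Bool) (b : Bool) : cyl (σ ++ [b]) ⊆ cyl σ :=
  fun _ hz => (mem_cyl_append.1 hz).1

lemma cyl_split (σ : List Bool) : cyl σ = cyl (σ ++ [false]) ∪ cyl (σ ++ [true]) := by
  ext z
  simp only [Set.mem_union, mem_cyl_append]
  cases hb : z σ.length <;> tauto

lemma cyl_disjoint (σ : List Bool) : Disjoint (cyl (σ ++ [false])) (cyl (σ ++ [true])) := by
  rw [Set.disjoint_left]
  intro z h0 h1
  have := (mem_cyl_append.1 h0).2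
  have := (mem_cyl_append.1 h1).2
  simp_all

lemma measurableSet_cyl (σ : List Bool) : MeasurableSet (cyl σ) := by
  have : cyl σ = ⋂ i : Fin σ.length, (fun z : Cantor => z i) ⁻¹' {σ.get i} := by
    ext z; simp [cyl]
  rw [this]
  exact MeasurableSet.iInter fun i => (measurable_pi_apply _) (measurableSet_singleton _)


variable {μ ν : Measure Cantor}

lemma cylR_pos [IsProbabilityMeasure μ] (hμ : FullSupport μ) (σ : List Bool) :
    0 < (μ (cyl σ)).toReal :=
  ENNReal.toReal_pos (hμ σ).ne' (measure_ne_top μ _)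

lemma cyl_sum [IsProbabilityMeasure μ] (σ : List Bool) :
    (μ (cyl σ)).toReal
      = (μ (cyl (σ ++ [false]))).toReal + (μ (cyl (σ ++ [true]))).toReal := by
  rw [cyl_split σ, measure_union (cyl_disjoint σ) (measurableSet_cyl _),
    ENNReal.toReal_add (measure_ne_top μ _) (measure_ne_top μ _)]

lemma Falg_le (k : ℕ) : Falg k ≤ MeasurableSpace.pi := by
  apply MeasurableSpace.generateFrom_le
  rintro t ⟨σ, -, rfl⟩
  exact measurableSet_cyl σ

lemma falg_invariant {k : ℕ} {A : Set Cantor} (hA : MeasurableSet[Falg k] A) :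
    ∀ z z' : Cantor, (∀ i < k, z i = z' i) → (z ∈ A ↔ z' ∈ A) := by
  refine MeasurableSpace.generateFrom_induction _
    (fun A _ => ∀ z z' : Cantor, (∀ i < k, z i = z' i) → (z ∈ A ↔ z' ∈ A))
    ?_ ?_ ?_ ?_ A hA
  · rintro t ⟨σ, hσ, rfl⟩ - z z' hzz
    simp only [cyl, Set.mem_setOf_eq]
    constructor <;> intro h i
    · rw [← hzz i (hσ ▸ i.2)]; exact h i
    · rw [hzz i (hσ ▸ i.2)]; exact h i
  · intro z z' _; simp
  · intro t _ ht z z' h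
    simp only [Set.mem_compl_iff]
    exact not_congr (ht z z' h)
  · intro s _ hs z z' h
    simp only [Set.mem_iUnion]
    exact exists_congr fun n => hs n z z' h

lemma inter_cyl_dichotomy {k : ℕ} {A : Set Cantor} (hA : MeasurableSet[Falg k] A)
    {τ : List Bool} (hτ : τ.length = k) :
    A ∩ cyl τ = ∅ ∨ A ∩ cyl τ = cyl τ := by
  by_cases h : A ∩ cyl τ = ∅
  · exact Or.inl h
  · right
    obtain ⟨z, hzA, hzτ⟩ := Set.nonempty_iff_ne_empty.2 h
    refine Set.inter_eq_right.mpr fun z' hz' => (falg_invariant hA z z' ?_).1 hzA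
    intro i hi
    have hi' : i < τ.length := hτ ▸ hi
    rw [hzτ ⟨i, hi'⟩, hz' ⟨i, hi'⟩]

lemma condMeas_apply [IsProbabilityMeasure μ] (σ : List Bool) {A : Set Cantor}
    (hA : MeasurableSet A) :
    ((condMeas μ σ) A).toReal = (μ (A ∩ cyl σ)).toReal / (μ (cyl σ)).toReal := by
  simp [condMeas, Measure.restrict_apply hA, ENNReal.toReal_mul, ENNReal.toReal_inv,
    div_eq_inv_mul]

lemma abs_flip {p0 p1 q0 q1 : ℝ} (hp : p0 + p1 = 1) (hq : q0 + q1 = 1) :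
    |p0 - q0| = |p1 - q1| := by
  have : p0 - q0 = -(p1 - q1) := by linarith
  rw [this, abs_neg]

lemma condMeas_eval [IsProbabilityMeasure μ] (hμ : FullSupport μ) (σ : List Bool)
    {A : Set Cantor} (hA : MeasurableSet[Falg (σ.length + 1)] A) :
    ((condMeas μ σ) A).toReal =
      ((μ (A ∩ cyl (σ ++ [false]))).toReal + (μ (A ∩ cyl (σ ++ [true]))).toReal)
        / (μ (cyl σ)).toReal := by
  rw [condMeas_apply σ (Falg_le _ _ hA)]
  congr 1
  have hsplit : A ∩ cyl σ = (A ∩ cyl (σ ++ [false])) ∪ (A ∩ cyl (σ ++ [true])) := by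
    rw [cyl_split σ, Set.inter_union_distrib_left]
  have hd : Disjoint (A ∩ cyl (σ ++ [false])) (A ∩ cyl (σ ++ [true])) :=
    (cyl_disjoint σ).mono Set.inter_subset_right Set.inter_subset_right
  rw [hsplit, measure_union hd ((Falg_le _ _ hA).inter (measurableSet_cyl _)),
    ENNReal.toReal_add (measure_ne_top μ _) (measure_ne_top μ _)]

lemma tv_bound [IsProbabilityMeasure μ] [IsProbabilityMeasure ν]
    (hμ : FullSupport μ) (hν : FullSupport ν) (σ : List Bool) (b : Bool)
    {A : Set Cantor} (hA : MeasurableSet[Falg (σ.length + 1)] A) :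
    |((condMeas μ σ) A).toReal - ((condMeas ν σ) A).toReal| ≤
      |cp μ (σ ++ [b]) σ - cp ν (σ ++ [b]) σ| := by
  have hlen : ∀ c : Bool, (σ ++ [c]).length = σ.length + 1 := by simp
  have hμpos := cylR_pos hμ σ
  have hνpos := cylR_pos hν σ
  have hpsum : cp μ (σ ++ [false]) σ + cp μ (σ ++ [true]) σ = 1 := by
    rw [cp, cp, ← add_div, ← cyl_sum, div_self hμpos.ne']
  have hqsum : cp ν (σ ++ [false]) σ + cp ν (σ ++ [true]) σ = 1 := by
    rw [cp, cp, ← add_div, ← cyl_sum, div_self hνpos.ne']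
  rw [condMeas_eval hμ σ hA, condMeas_eval hν σ hA]
  have key : ∀ c : Bool,
      ((μ (A ∩ cyl (σ ++ [c]))).toReal = 0 ∧ (ν (A ∩ cyl (σ ++ [c]))).toReal = 0) ∨
      ((μ (A ∩ cyl (σ ++ [c]))).toReal = (μ (cyl (σ ++ [c]))).toReal ∧
       (ν (A ∩ cyl (σ ++ [c]))).toReal = (ν (cyl (σ ++ [c]))).toReal) := by
    intro c
    rcases inter_cyl_dichotomy hA (hlen c) with h | h
    · left; rw [h]; simp
    · right; rw [h]; exact ⟨rfl, rfl⟩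
  have habs : |cp μ (σ ++ [false]) σ - cp ν (σ ++ [false]) σ| =
      |cp μ (σ ++ [true]) σ - cp ν (σ ++ [true]) σ| := abs_flip hpsum hqsum
  have hb : |cp μ (σ ++ [b]) σ - cp ν (σ ++ [b]) σ| =
      |cp μ (σ ++ [false]) σ - cp ν (σ ++ [false]) σ| := by
    cases b
    · rfl
    · exact habs.symm
  rw [hb]
  rcases key false with ⟨h0μ, h0ν⟩ | ⟨h0μ, h0ν⟩ <;>
    rcases key true with ⟨h1μ, h1ν⟩ | ⟨h1μ, h1ν⟩ <;>
    rw [h0μ, h0ν, h1μ, h1ν]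
  · simp
  · rw [zero_add, zero_add]
    exact le_of_eq habs.symm
  · rw [add_zero, add_zero]
    exact le_of_eq rfl
  · have e1 : ((μ (cyl (σ ++ [false]))).toReal + (μ (cyl (σ ++ [true]))).toReal)
        / (μ (cyl σ)).toReal = 1 := by rw [← cyl_sum, div_self hμpos.ne']
    have e2 : ((ν (cyl (σ ++ [false]))).toReal + (ν (cyl (σ ++ [true]))).toReal)
        / (ν (cyl σ)).toReal = 1 := by rw [← cyl_sum, div_self hνpos.ne']
    rw [e1, e2]
    simp

lemma condMeas_cyl [IsProbabilityMeasure μ] (σ : List Bool) (b : Bool) :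
    ((condMeas μ σ) (cyl (σ ++ [b]))).toReal = cp μ (σ ++ [b]) σ := by
  rw [condMeas_apply σ (measurableSet_cyl _),
    Set.inter_eq_left.mpr (cyl_append_subset σ b)]
  rfl

lemma tv_eq [IsProbabilityMeasure μ] [IsProbabilityMeasure ν]
    (hμ : FullSupport μ) (hν : FullSupport ν) (σ : List Bool) (b : Bool) :
    tv (Falg (σ.length + 1)) (condMeas μ σ) (condMeas ν σ)
      = |cp μ (σ ++ [b]) σ - cp ν (σ ++ [b]) σ| := by
  have hbdd : BddAbove (Set.range fun A : {A : Set Cantor // MeasurableSet[Falg (σ.length + 1)] A} =>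
      |((condMeas μ σ) A.1).toReal - ((condMeas ν σ) A.1).toReal|) := by
    refine ⟨|cp μ (σ ++ [b]) σ - cp ν (σ ++ [b]) σ|, ?_⟩
    rintro x ⟨⟨A, hA⟩, rfl⟩
    exact tv_bound hμ hν σ b hA
  apply le_antisymm
  · exact ciSup_le fun ⟨A, hA⟩ => tv_bound hμ hν σ b hA
  · have hmem : MeasurableSet[Falg (σ.length + 1)] (cyl (σ ++ [b])) :=
      MeasurableSpace.measurableSet_generateFrom ⟨σ ++ [b], by simp, rfl⟩
    have := le_ciSup hbdd ⟨cyl (σ ++ [b]), hmem⟩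
    rwa [condMeas_cyl σ b, condMeas_cyl σ b] at this


/-- For a `ν`-mild point `ω`, the following are equivalent: the one-step total variational
distances tend to `0`; the one-step conditional probabilities merge; the successive ratios of
the martingale `M(σ) = μ([σ])/ν([σ])` tend to `1`. -/
theorem stmt10 (μ ν : Measure Cantor) [IsProbabilityMeasure μ] [IsProbabilityMeasure ν]
    (hμ : FullSupport μ) (hν : FullSupport ν) (ω : Cantor)
    (hmild : 0 < Filter.liminf (fun n : ℕ => cp ν (pre ω (n + 1)) (pre ω n)) atTop) :
    (Tendsto (fun n : ℕ =>
        tv (Falg (n + 1)) (condMeas μ (pre ω n)) (condMeas ν (pre ω n))) atTop (𝓝 0) ↔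
      Tendsto (fun n : ℕ =>
        |cp μ (pre ω (n + 1)) (pre ω n) - cp ν (pre ω (n + 1)) (pre ω n)|) atTop (𝓝 0)) ∧
    (Tendsto (fun n : ℕ =>
        |cp μ (pre ω (n + 1)) (pre ω n) - cp ν (pre ω (n + 1)) (pre ω n)|) atTop (𝓝 0) ↔
      Tendsto (fun n : ℕ =>
        ((μ (cyl (pre ω (n + 1)))).toReal / (ν (cyl (pre ω (n + 1)))).toReal) /
          ((μ (cyl (pre ω n))).toReal / (ν (cyl (pre ω n))).toReal)) atTop (𝓝 1)) := by
  have h1 : (fun n : ℕ => tv (Falg (n + 1)) (condMeas μ (pre ω n)) (condMeas ν (pre ω n)))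
      = fun n : ℕ => |cp μ (pre ω (n + 1)) (pre ω n) - cp ν (pre ω (n + 1)) (pre ω n)| := by
    funext n
    have h := tv_eq hμ hν (pre ω n) (ω n)
    rw [pre_length ω n, ← pre_succ ω n] at h
    exact h
  refine ⟨by rw [h1], ?_⟩
  set a : ℕ → ℝ := fun n => cp μ (pre ω (n + 1)) (pre ω n) with ha
  set b : ℕ → ℝ := fun n => cp ν (pre ω (n + 1)) (pre ω n) with hb
  have hbpos : ∀ n, 0 < b n := fun n => div_pos (cylR_pos hν _) (cylR_pos hν _)
  have hble : ∀ n, b n ≤ 1 := by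
    intro n
    apply div_le_one_of_le₀
    · exact ENNReal.toReal_mono (measure_ne_top ν _)
        (measure_mono (pre_succ ω n ▸ cyl_append_subset (pre ω n) (ω n)))
    · exact (cylR_pos hν _).le
  have hr : ∀ n, ((μ (cyl (pre ω (n + 1)))).toReal / (ν (cyl (pre ω (n + 1)))).toReal) /
          ((μ (cyl (pre ω n))).toReal / (ν (cyl (pre ω n))).toReal) = a n / b n := by
    intro n
    have e1 := (cylR_pos hμ (pre ω n)).ne'
    have e2 := (cylR_pos hν (pre ω n)).ne'
    have e3 := (cylR_pos hν (pre ω (n + 1))).ne'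
    simp only [ha, hb, cp]
    exact div_div_div_comm _ _ _ _
  have hre : (fun n : ℕ =>
      ((μ (cyl (pre ω (n + 1)))).toReal / (ν (cyl (pre ω (n + 1)))).toReal) /
        ((μ (cyl (pre ω n))).toReal / (ν (cyl (pre ω n))).toReal))
      = fun n => a n / b n := funext hr
  rw [hre]
  set L := Filter.liminf (fun n : ℕ => cp ν (pre ω (n + 1)) (pre ω n)) atTop with hL
  have hev : ∀ᶠ n in atTop, L / 2 < b n := by
    apply eventually_lt_of_lt_liminf
    · rw [← hL]; linarith
    · exact isBoundedUnder_of ⟨0, fun n => (hbpos n).le⟩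
  constructor
  · intro h
    rw [← tendsto_sub_nhds_zero_iff, tendsto_zero_iff_norm_tendsto_zero]
    apply squeeze_zero' (Eventually.of_forall fun n => norm_nonneg _)
      (g := fun n => |a n - b n| * (2 / L)) ?_ ?_
    · filter_upwards [hev] with n hn
      have hq : a n / b n - 1 = (a n - b n) / b n := by
        rw [sub_div, div_self (hbpos n).ne']
      rw [Real.norm_eq_abs, hq, abs_div, abs_of_pos (hbpos n)]
      calc |a n - b n| / b n ≤ |a n - b n| / (L / 2) :=
            div_le_div_of_nonneg_left (abs_nonneg _) (by linarith) hn.le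
        _ = |a n - b n| * (2 / L) := by rw [div_eq_mul_inv, inv_div]
    · have := h.mul_const (2 / L)
      simpa using this
  · intro h
    have h2 : Tendsto (fun n => a n / b n - 1) atTop (𝓝 0) :=
      tendsto_sub_nhds_zero_iff.2 h
    apply squeeze_zero' (Eventually.of_forall fun n => abs_nonneg _)
      (g := fun n => |a n / b n - 1|) ?_ ?_
    · apply Eventually.of_forall
      intro n
      have hq : a n - b n = b n * (a n / b n - 1) := by
        rw [mul_sub, mul_one, mul_div_cancel₀ _ (hbpos n).ne']
      rw [hq, abs_mul, abs_of_pos (hbpos n)]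
      calc b n * |a n / b n - 1| ≤ 1 * |a n / b n - 1| :=
            mul_le_mul_of_nonneg_right (hble n) (abs_nonneg _)
        _ = |a n / b n - 1| := one_mul _
    · simpa [Real.norm_eq_abs] using tendsto_zero_iff_norm_tendsto_zero.1 h2
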